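/- Let A, B, C be admissible linear chains with e(B) = 1 − e(Aᵀ) and e(C) = 1 − e(Bᵀ). Then C = A. (That is, the adjoint operation on admissible linear chains is an involution: A** = A.) -/

import Mathlib

/-- The tridiagonal matrix associated to a linear chain `A = [a₁,…,a_r]`:
diagonal entries `aᵢ`, entries `-1` immediately above/below the diagonal, `0` elsewhere. -/
def chainMatrix (A : List ℤ) : Matrix (Fin A.length) (Fin A.length) ℤ :=
  fun i j =>
    if i = j then A.get i
    else if (i : ℕ) + 1 = (j : ℕ) ∨ (j : ℕ) + 1 = (i : ℕ) then -1 else 0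

/-- The discriminant `d(A)` of a linear chain: the determinant of `chainMatrix A`
(the `0 × 0` determinant being `1` for the empty list). -/
def disc (A : List ℤ) : ℤ := (chainMatrix A).det

/-- A linear chain is admissible if it is nonempty and all of its entries are `≥ 2`. -/
def Admissible (A : List ℤ) : Prop := A ≠ [] ∧ ∀ a ∈ A, 2 ≤ a

/-- The inductance `e(A) = d(A̅)/d(A)` of a linear chain, as a rational number. -/
def inductance (A : List ℤ) : ℚ := (disc A.tail : ℚ) / (disc A : ℚ)



lemma chainMatrix_apply_zero (a : ℤ) (l : List ℤ) (c : Fin (l.length + 1))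
    (hc0 : (c:ℕ) ≠ 0) (hc1 : (c:ℕ) ≠ 1) :
    chainMatrix (a :: l) (0 : Fin (l.length+1)) c = 0 := by
  simp only [chainMatrix]
  rw [if_neg, if_neg]
  · rintro (h | h)
    · exact hc1 h.symm
    · simp at h
  · intro h
    exact hc0 (by have := congrArg Fin.val h; simp only [Fin.val_zero] at this; omega)

lemma submatrix_zero (a : ℤ) (l : List ℤ) :
    (chainMatrix (a :: l)).submatrix Fin.succ (Fin.succAbove (0 : Fin (l.length+1))) =
      chainMatrix l := by
  ext i j
  simp only [Matrix.submatrix_apply, chainMatrix]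
  rw [Fin.succAbove_of_le_castSucc 0 j (by simp [Fin.le_def])]
  by_cases h : i = j
  · subst h; simp [Fin.ext_iff]
  · rw [if_neg, if_neg h]
    · congr 1
      simp only [Fin.val_succ, eq_iff_iff]
      omega
    · simp only [Fin.ext_iff, Fin.val_succ]
      simp only [Fin.ext_iff] at h; omega

lemma chainMatrix_succ_succ (x : ℤ) (l : List ℤ) (i j : Fin l.length) :
    chainMatrix (x :: l) i.succ j.succ = chainMatrix l i j := by
  simp only [chainMatrix, Fin.succ_inj, Fin.val_succ]
  by_cases h : i = j
  · subst h; simp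
  · rw [if_neg h, if_neg h]
    congr 1
    simp only [eq_iff_iff]
    omega

lemma submatrix_one (a b : ℤ) (l : List ℤ) :
    (((chainMatrix (a::b::l)).submatrix Fin.succ (Fin.succAbove (1 : Fin (l.length+2)))).submatrix
      (Fin.succAbove (0 : Fin (l.length+1))) Fin.succ) = chainMatrix l := by
  ext i j
  have h1 : Fin.succAbove (1 : Fin (l.length+2)) (Fin.succ j) = (j.succ).succ :=
    Fin.succAbove_of_le_castSucc _ _ (by simp [Fin.le_def])
  simp only [Matrix.submatrix_apply, Fin.succAbove_zero, h1]
  rw [chainMatrix_succ_succ a (b::l), chainMatrix_succ_succ b l]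

lemma disc_cons_cons (a b : ℤ) (l : List ℤ) :
    disc (a :: b :: l) = a * disc (b :: l) - disc l := by
  rw [disc, Matrix.det_succ_row_zero]
  show (∑ j : Fin (l.length+2), (-1)^(j:ℕ) * chainMatrix (a::b::l) (0 : Fin (l.length+2)) j *
      ((chainMatrix (a::b::l)).submatrix Fin.succ j.succAbove).det) = _
  rw [Fintype.sum_eq_add (0 : Fin (l.length + 2)) 1 (by simp [Fin.ext_iff]) ?h0]
  case h0 =>
    rintro c ⟨hc0, hc1⟩
    have hz : chainMatrix (a::b::l) (0 : Fin (l.length+2)) c = 0 :=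
      chainMatrix_apply_zero a (b::l) c (by intro h; apply hc0; ext; simp only [h, Fin.val_zero])
        (by intro h; apply hc1; ext; simp only [h, Fin.val_one])
    rw [hz]; ring
  have e0 : (chainMatrix (a::b::l)).submatrix Fin.succ (Fin.succAbove (0 : Fin (l.length+2))) =
      chainMatrix (b::l) := submatrix_zero a (b::l)
  have hsa : Fin.succAbove (1 : Fin (l.length+2)) (0 : Fin (l.length+1)) =
      (0 : Fin (l.length+2)) := by
    rw [Fin.succAbove_of_castSucc_lt _ _ (by simp [Fin.lt_def])]; rfl
  have e1 : ((chainMatrix (a::b::l)).submatrix Fin.succ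
      (Fin.succAbove (1 : Fin (l.length+2)))).det = - disc l := by
    rw [Matrix.det_succ_column_zero]
    rw [Fintype.sum_eq_single (0 : Fin (l.length + 1)) ?h1]
    case h1 =>
      intro i hi
      have hz : (chainMatrix (a::b::l)).submatrix Fin.succ
          (Fin.succAbove (1 : Fin (l.length+2))) i (0 : Fin (l.length+1)) = 0 := by
        simp only [Matrix.submatrix_apply, hsa]
        simp only [chainMatrix]
        rw [if_neg, if_neg]
        · simp only [Fin.val_succ, Fin.val_zero]
          rintro (h | h)
          · omega
          · exact hi (by ext; simpa using h.symm)
        · intro h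
          have := congrArg Fin.val h
          simp [Fin.val_succ] at this
      rw [hz]; ring
    have hN00 : (chainMatrix (a::b::l)).submatrix Fin.succ
        (Fin.succAbove (1 : Fin (l.length+2))) (0 : Fin (l.length+1)) (0 : Fin (l.length+1))
        = -1 := by
      simp only [Matrix.submatrix_apply, hsa]
      simp only [chainMatrix]
      rw [if_neg, if_pos]
      · right; simp
      · intro h
        have := congrArg Fin.val h
        simp [Fin.val_succ] at this
    rw [hN00, submatrix_one a b l]
    simp [disc]
  rw [e0, e1]
  have hM00 : chainMatrix (a::b::l) (0 : Fin (l.length+2)) (0 : Fin (l.length+2)) = a := by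
    simp [chainMatrix]
  have hM01 : chainMatrix (a::b::l) (0 : Fin (l.length+2)) (1 : Fin (l.length+2)) = -1 := by
    simp only [chainMatrix]
    rw [if_neg, if_pos]
    · left; simp
    · intro h
      have := congrArg Fin.val h
      simp at this
  rw [hM00, hM01]
  simp [disc]
  ring

lemma disc_nil : disc [] = 1 := by
  simp [disc, Matrix.det_isEmpty]

lemma disc_singleton (a : ℤ) : disc [a] = a := by
  simp [disc, Matrix.det_fin_one, chainMatrix]

lemma disc_cons (a : ℤ) {l : List ℤ} (hl : l ≠ []) :
    disc (a :: l) = a * disc l - disc l.tail := by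
  obtain ⟨b, m, rfl⟩ : ∃ b m, l = b :: m := by
    cases l with | nil => simp at hl | cons b m => exact ⟨b, m, rfl⟩
  simpa using disc_cons_cons a b m

lemma chainMatrix_reverse (A : List ℤ) :
    chainMatrix A.reverse =
      ((chainMatrix A).submatrix
        (fun i => Fin.rev (Fin.cast A.length_reverse i))
        (fun i => Fin.rev (Fin.cast A.length_reverse i))) := by
  ext i j
  have hi := i.isLt
  have hj := j.isLt
  simp only [List.length_reverse] at hi hj
  have hrev : ∀ k : Fin A.reverse.length,
      ((Fin.rev (Fin.cast A.length_reverse k)) : ℕ) = A.length - 1 - (k : ℕ) := by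
    intro k
    simp only [Fin.val_rev, Fin.coe_cast]
    omega
  simp only [Matrix.submatrix_apply, chainMatrix]
  by_cases h : i = j
  · subst h
    rw [if_pos rfl, if_pos rfl]
    rw [List.get_eq_getElem, List.get_eq_getElem, List.getElem_reverse]
    congr 1
    rw [hrev]
  · have hne : Fin.rev (Fin.cast A.length_reverse i) ≠ Fin.rev (Fin.cast A.length_reverse j) := by
      intro he
      apply h
      have := congrArg Fin.val he
      rw [hrev, hrev] at this
      ext; omega
    rw [if_neg h, if_neg hne]
    congr 1
    simp only [eq_iff_iff, hrev]
    omega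

lemma disc_reverse (A : List ℤ) : disc A.reverse = disc A := by
  rw [disc, chainMatrix_reverse, disc]
  have : ((chainMatrix A).submatrix
        (fun i => Fin.rev (Fin.cast A.length_reverse i))
        (fun i => Fin.rev (Fin.cast A.length_reverse i))) =
      ((chainMatrix A).submatrix
        ⇑((finCongr A.length_reverse).trans (Fin.revPerm))
        ⇑((finCongr A.length_reverse).trans (Fin.revPerm))) := rfl
  rw [this, Matrix.det_submatrix_equiv_self]

lemma Admissible.tail {a : ℤ} {l : List ℤ} (h : Admissible (a :: l)) (hl : l ≠ []) :
    Admissible l :=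
  ⟨hl, fun x hx => h.2 x (List.mem_cons_of_mem a hx)⟩

lemma Admissible.head {a : ℤ} {l : List ℤ} (h : Admissible (a :: l)) : 2 ≤ a :=
  h.2 a List.mem_cons_self

lemma disc_tail_lt : ∀ (A : List ℤ), Admissible A → 0 < disc A.tail ∧ disc A.tail < disc A := by
  intro A
  induction A with
  | nil => intro h; exact absurd rfl h.1
  | cons a l ih =>
    intro h
    by_cases hl : l = []
    · subst hl
      simp only [List.tail_cons, disc_nil, disc_singleton]
      exact ⟨one_pos, by linarith [h.head]⟩
    · obtain ⟨h1, h2⟩ := ih (h.tail hl)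
      have ha := h.head
      have hlpos : 0 < disc l := lt_trans h1 h2
      rw [List.tail_cons, disc_cons a hl]
      constructor
      · exact hlpos
      · nlinarith

lemma disc_pos {A : List ℤ} (h : Admissible A) : 0 < disc A :=
  lt_trans (disc_tail_lt A h).1 (disc_tail_lt A h).2

lemma two_le_disc {A : List ℤ} (h : Admissible A) : 2 ≤ disc A := by
  have := disc_tail_lt A h
  omega

lemma disc_identity : ∀ (l : List ℤ) (a : ℤ), l ≠ [] →
    disc l * disc ((a :: l).dropLast) - disc (a :: l) * disc l.dropLast = 1 := by
  intro l
  induction l with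
  | nil => intro a h; exact absurd rfl h
  | cons b m ih =>
    intro a _
    by_cases hm : m = []
    · subst hm
      simp [disc_singleton, disc_nil, disc_cons_cons]
      ring
    · have hbm : (b :: m) ≠ [] := by simp
      have hd1 : (a :: b :: m).dropLast = a :: (b :: m).dropLast := by
        simp [List.dropLast]
      have hd2 : (b :: m).dropLast = b :: m.dropLast := by
        cases m with | nil => simp at hm | cons x xs => simp [List.dropLast]
      have hd2ne : (b :: m).dropLast ≠ [] := by rw [hd2]; simp
      have hrec1 : disc (a :: (b :: m).dropLast)
          = a * disc ((b :: m).dropLast) - disc ((b :: m).dropLast).tail := disc_cons a hd2ne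
      have htl : ((b :: m).dropLast).tail = m.dropLast := by rw [hd2]; rfl
      have hrec2 : disc (a :: b :: m) = a * disc (b :: m) - disc m := disc_cons_cons a b m
      have key := ih b hm
      rw [hd1, hrec1, htl, hrec2]
      nlinarith [key]

lemma disc_dvd_identity {A : List ℤ} (hA : A ≠ []) :
    disc A ∣ disc A.tail * disc A.dropLast - 1 := by
  cases A with
  | nil => exact absurd rfl hA
  | cons a l =>
    by_cases hl : l = []
    · subst hl; simp [disc_nil]
    · have := disc_identity l a hl
      refine ⟨disc l.dropLast, ?_⟩
      simp only [List.tail_cons]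
      linarith

lemma inductance_pos {A : List ℤ} (h : Admissible A) : 0 < inductance A := by
  have h1 := (disc_tail_lt A h).1
  have h2 := disc_pos h
  exact div_pos (by exact_mod_cast h1) (by exact_mod_cast h2)

lemma inductance_lt_one {A : List ℤ} (h : Admissible A) : inductance A < 1 := by
  have h1 := (disc_tail_lt A h).2
  have h2 := disc_pos h
  rw [inductance, div_lt_one (by exact_mod_cast h2)]
  exact_mod_cast h1

lemma inv_inductance {a : ℤ} {l : List ℤ} (h : Admissible (a :: l)) :
    (inductance (a :: l))⁻¹ = (a : ℚ) - (if l = [] then 0 else inductance l) := by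
  by_cases hl : l = []
  · subst hl
    have ha : (2:ℤ) ≤ a := h.head
    have : (a : ℚ) ≠ 0 := by exact_mod_cast (by omega : a ≠ 0)
    simp [inductance, disc_nil, disc_singleton, this]
  · rw [if_neg hl]
    have hlpos : (0:ℚ) < (disc l : ℚ) := by
      exact_mod_cast disc_pos (h.tail hl)
    have hapos : (0:ℚ) < (disc (a::l) : ℚ) := by exact_mod_cast disc_pos h
    rw [inductance, inductance, List.tail_cons]
    rw [disc_cons a hl]
    field_simp
    push_cast; ring

lemma inductance_inv_bounds {a : ℤ} {l : List ℤ} (h : Admissible (a :: l)) :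
    (a : ℚ) - 1 < (inductance (a :: l))⁻¹ ∧ (inductance (a :: l))⁻¹ ≤ a := by
  rw [inv_inductance h]
  by_cases hl : l = []
  · simp [hl]
  · rw [if_neg hl]
    have h1 := inductance_pos (h.tail hl)
    have h2 := inductance_lt_one (h.tail hl)
    constructor <;> linarith

lemma inductance_injective : ∀ (A : List ℤ), Admissible A → ∀ C, Admissible C →
    inductance A = inductance C → A = C := by
  intro A
  induction A with
  | nil => intro h; exact absurd rfl h.1
  | cons a l ih =>
    intro hA C hC heq
    cases C with
    | nil => exact absurd rfl hC.1
    | cons c m =>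
      have hinv : (inductance (a :: l))⁻¹ = (inductance (c :: m))⁻¹ := by rw [heq]
      rw [inv_inductance hA, inv_inductance hC] at hinv
      have hbA := inductance_inv_bounds hA
      have hbC := inductance_inv_bounds hC
      rw [inv_inductance hA] at hbA
      rw [inv_inductance hC] at hbC
      have hac : a = c := by
        have h1 : (a : ℚ) - 1 < c := lt_of_lt_of_le hbA.1 (by rw [hinv] at hbA ⊢; exact hbC.2)
        have h2 : (c : ℚ) - 1 < a := lt_of_lt_of_le hbC.1 (by rw [← hinv] at hbC ⊢; exact hbA.2)
        have h1' : a - 1 < c := by exact_mod_cast h1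
        have h2' : c - 1 < a := by exact_mod_cast h2
        omega
      subst hac
      have hE : (if l = [] then (0:ℚ) else inductance l) =
          (if m = [] then (0:ℚ) else inductance m) := by
        have := hinv
        linarith
      by_cases hl : l = []
      · by_cases hm : m = []
        · rw [hl, hm]
        · rw [if_pos hl, if_neg hm] at hE
          exact absurd hE.symm (ne_of_gt (inductance_pos (hC.tail hm)))
      · by_cases hm : m = []
        · rw [if_neg hl, if_pos hm] at hE
          exact absurd hE (ne_of_gt (inductance_pos (hA.tail hl)))
        · rw [if_neg hl, if_neg hm] at hE
          rw [ih (hA.tail hl) m (hC.tail hm) hE]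

lemma Admissible.reverse {A : List ℤ} (h : Admissible A) : Admissible A.reverse :=
  ⟨by simp [h.1], fun x hx => h.2 x (List.mem_reverse.mp hx)⟩

lemma disc_dropLast_lt {A : List ℤ} (h : Admissible A) :
    0 < disc A.dropLast ∧ disc A.dropLast < disc A := by
  have := disc_tail_lt A.reverse h.reverse
  rwa [List.tail_reverse, disc_reverse, disc_reverse] at this

lemma inductance_reverse (A : List ℤ) :
    inductance A.reverse = (disc A.dropLast : ℚ) / (disc A : ℚ) := by
  rw [inductance, List.tail_reverse, disc_reverse, disc_reverse]

lemma coprime_tail_disc {A : List ℤ} (h : Admissible A) : IsCoprime (disc A.tail) (disc A) := by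
  obtain ⟨k, hk⟩ := disc_dvd_identity h.1
  exact ⟨disc A.dropLast, -k, by linarith⟩

lemma coprime_sub_dropLast {A : List ℤ} (h : Admissible A) :
    IsCoprime (disc A - disc A.dropLast) (disc A) := by
  obtain ⟨k, hk⟩ := disc_dvd_identity h.1
  exact ⟨-disc A.tail, disc A.tail - k, by ring_nf; ring_nf at hk; linarith⟩

/-- If `Y = X*` then `d(Y) = d(X)` and `d(Y̅) = d(X) - d(X̲)`. -/
lemma adjoint_data {X Y : List ℤ} (hX : Admissible X) (hY : Admissible Y)
    (h : inductance Y = 1 - inductance X.reverse) :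
    disc Y = disc X ∧ disc Y.tail = disc X - disc X.dropLast := by
  set d := disc X with hd
  set q := disc X.dropLast with hq
  set dY := disc Y with hdY
  set pY := disc Y.tail with hpY
  have hdpos : (0:ℤ) < d := disc_pos hX
  have hdYpos : (0:ℤ) < dY := disc_pos hY
  have hqb := disc_dropLast_lt hX
  have hdne : (d:ℚ) ≠ 0 := by exact_mod_cast hdpos.ne'
  have hdYne : (dY:ℚ) ≠ 0 := by exact_mod_cast hdYpos.ne'
  rw [inductance, inductance_reverse] at h
  have hcross : pY * d = (d - q) * dY := by
    have : (pY : ℚ) * d = (d - q) * dY := by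
      rw [← hpY, ← hd, ← hq, ← hdY] at h
      field_simp at h
      linarith
    exact_mod_cast this
  have hco1 : IsCoprime pY dY := coprime_tail_disc hY
  have hco2 : IsCoprime (d - q) d := coprime_sub_dropLast hX
  have hdvd1 : dY ∣ d := (hco1.symm).dvd_of_dvd_mul_left ⟨d - q, by linarith⟩
  have hdvd2 : d ∣ dY := (hco2.symm).dvd_of_dvd_mul_left ⟨pY, by linarith⟩
  have hddY : dY = d := Int.dvd_antisymm hdYpos.le hdpos.le hdvd1 hdvd2
  refine ⟨hddY, ?_⟩
  have : pY * d = (d - q) * d := by rw [hcross, hddY]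
  have := mul_right_cancel₀ hdpos.ne' this
  omega


/-- Lemma 2.2 (ii), `A** = A`: if `B = A*` (i.e. `e(B) = 1 − e(Aᵀ)`) and
`C = B*` (i.e. `e(C) = 1 − e(Bᵀ)`), then `C = A`. -/
theorem adjoint_involutive (A B C : List ℤ)
    (hA : Admissible A) (hB : Admissible B) (hC : Admissible C)
    (hAB : inductance B = 1 - inductance A.reverse)
    (hBC : inductance C = 1 - inductance B.reverse) :
    C = A := by
  obtain ⟨hdB, hpB⟩ := adjoint_data hA hB hAB
  obtain ⟨hdC, hpC⟩ := adjoint_data hB hC hBC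
  set d := disc A with hd
  set p := disc A.tail with hp
  set q := disc A.dropLast with hq
  set qB := disc B.dropLast with hqB
  -- show qB = d - p
  have hk0 := disc_dvd_identity hA.1
  have hk1 := disc_dvd_identity hB.1
  rw [hdB, hpB] at hk1
  obtain ⟨k, hk⟩ := hk0
  have h2 : d ∣ (d - q) * (d - p) - 1 := ⟨d - p - q + k, by ring_nf; ring_nf at hk; linarith⟩
  have h3 : d ∣ (d - q) * (qB - (d - p)) := by
    have : (d - q) * (qB - (d - p)) = ((d - q) * qB - 1) - ((d - q) * (d - p) - 1) := by ring
    rw [this]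
    exact dvd_sub hk1 h2
  have hcop : IsCoprime (d - q) d := coprime_sub_dropLast hA
  have h4 : d ∣ qB - (d - p) := hcop.symm.dvd_of_dvd_mul_left h3
  have hpb := disc_tail_lt A hA
  have hqBb := disc_dropLast_lt hB
  rw [hdB] at hqBb
  have hqB_eq : qB = d - p := by
    have := Int.eq_zero_of_abs_lt_dvd h4 (abs_lt.mpr ⟨by omega, by omega⟩)
    omega
  have hfin : inductance C = inductance A := by
    rw [inductance, inductance, hpC, hdC, hdB]
    rw [show d - qB = p from by rw [hqB_eq]; ring, hp, hd]
  exact inductance_injective C hC A hA hfin
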